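/- Let Π be a ground logic program over atoms A with rules indexed by a finite type R, and let T(Π) be its transformed program over A ⊎ R. If M ⊆ A is a model of Π, then M' = M ∪ { dm_r : r ∈ R, the body of rule r is false in M } is a model of T(Π). -/
import Mathlib


/-- A ground rule: head ← body⁺, not body⁻. -/
structure Rule (A : Type*) where
  head : A
  bodyPos : Finset A
  bodyNeg : Finset A
deriving DecidableEq

/-- The body of rule `r` is true in interpretation `M`:
`body⁺(r) ⊆ M` and `body⁻(r) ∩ M = ∅`. -/
def BodyTrue {A : Type*} (M : Set A) (r : Rule A) : Prop :=
  ↑r.bodyPos ⊆ M ∧ ∀ a ∈ r.bodyNeg, a ∉ M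

/-- `M` is a model of the program `P` (a family of rules indexed by `R`). -/
def IsModel {A R : Type*} (P : R → Rule A) (M : Set A) : Prop :=
  ∀ r, BodyTrue M (P r) → (P r).head ∈ M

/-- `M` is a supported model of `P`: a model in which every true atom
is the head of some rule of `P` whose body is true in `M`. -/
def IsSupported {A R : Type*} (P : R → Rule A) (M : Set A) : Prop :=
  IsModel P M ∧ ∀ a ∈ M, ∃ r, (P r).head = a ∧ ↑(P r).bodyPos ⊆ M ∧
    ∀ b ∈ (P r).bodyNeg, b ∉ M

/-- `N` is a model of the Gelfond–Lifschitz reduct `P^M`: for every rule of `P`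
surviving the reduct (i.e. with `body⁻(r) ∩ M = ∅`), whose negative literals are
removed, if its positive body holds in `N` then so does its head. -/
def ReductModel {A R : Type*} (P : R → Rule A) (M N : Set A) : Prop :=
  ∀ r, (∀ a ∈ (P r).bodyNeg, a ∉ M) → ↑(P r).bodyPos ⊆ N → (P r).head ∈ N

/-- `M` is a stable model of `P`: `M` is the least model of the reduct `P^M`. -/
def IsStable {A R : Type*} (P : R → Rule A) (M : Set A) : Prop :=
  ReductModel P M M ∧ ∀ N, ReductModel P M N → M ⊆ N

/-- Index type for the rules of the transformed program `T(P)`: one rule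
`head(r) ← not dm_r` per rule `r`, one rule `dm_r ← not l` per `l ∈ body⁺(r)`,
and one rule `dm_r ← l` per `l ∈ body⁻(r)`. -/
abbrev TransIdx {A R : Type*} (P : R → Rule A) : Type _ :=
  R ⊕ ((Σ r : R, {l // l ∈ (P r).bodyPos}) ⊕ (Σ r : R, {l // l ∈ (P r).bodyNeg}))

/-- The transformed program `T(P)` over atoms `A ⊕ R`, where `Sum.inr r`
plays the role of the fresh auxiliary atom `dm_r`. -/
def Transform {A R : Type*} (P : R → Rule A) : TransIdx P → Rule (A ⊕ R)
  | Sum.inl r => ⟨Sum.inl (P r).head, ∅, {Sum.inr r}⟩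
  | Sum.inr (Sum.inl ⟨r, l⟩) => ⟨Sum.inr r, ∅, {Sum.inl l.1}⟩
  | Sum.inr (Sum.inr ⟨r, l⟩) => ⟨Sum.inr r, {Sum.inl l.1}, ∅⟩

/-- `Lift P M = M ∪ { dm_r | the body of rule r is false in M }`,
viewing `M ⊆ A` as a subset of `A ⊕ R` via the left injection. -/
def Lift {A R : Type*} (P : R → Rule A) (M : Set A) : Set (A ⊕ R) :=
  Sum.inl '' M ∪ Sum.inr '' {r | ¬ BodyTrue M (P r)}

/-- If `M` is a model of `P`, then
`M' = M ∪ { dm_r | body of r is false in M }` is a model of `T(P)`. -/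
theorem model_gives_model_of_transform
    {A R : Type*} [Fintype R] (P : R → Rule A) (M : Set A)
    (h : IsModel P M) : IsModel (Transform P) (Lift P M) := by
  rintro (r | ⟨r, l, hl⟩ | ⟨r, l, hl⟩) hb
  · -- head(r) ← not dm_r
    obtain ⟨_, hneg⟩ := hb
    have hdm : Sum.inr r ∉ Lift P M := hneg (Sum.inr r) (Finset.mem_singleton_self _)
    have hbt : BodyTrue M (P r) := by
      by_contra hc
      exact hdm (Or.inr ⟨r, hc, rfl⟩)
    exact Or.inl ⟨(P r).head, h r hbt, rfl⟩
  · -- dm_r ← not l,  l ∈ bodyPos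
    obtain ⟨_, hneg⟩ := hb
    have hlM : Sum.inl l ∉ Lift P M := hneg (Sum.inl l) (Finset.mem_singleton_self _)
    refine Or.inr ⟨r, fun hbt => hlM (Or.inl ⟨l, hbt.1 hl, rfl⟩), rfl⟩
  · -- dm_r ← l,  l ∈ bodyNeg
    obtain ⟨hpos, _⟩ := hb
    have hlM : Sum.inl l ∈ Lift P M := hpos (Finset.mem_coe.mpr (Finset.mem_singleton_self _))
    have : l ∈ M := by
      rcases hlM with ⟨a, ha, hEq⟩ | ⟨s, _, hEq⟩
      · cases hEq; exact ha
      · cases hEq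
    exact Or.inr ⟨r, fun hbt => hbt.2 l hl this, rfl⟩
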